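/- For any natural numbers N ≥ 1 and d ≥ 1, there are infinitely many primes not belonging to S_{d,N} = ⋃_{i=1}^d Σ_{i,N}. -/
import Mathlib

/-- `IsSmooth N m` : `m ∈ Π_N`, the `N`-smooth positive integers. -/
def IsSmooth (N m : ℕ) : Prop := 0 < m ∧ ∀ p : ℕ, p.Prime → p ∣ m → p ≤ N

/-- `SigmaSet i N` = `Σ_{i,N}`, sums of exactly `i` elements of `Π_N`. -/
def SigmaSet (i N : ℕ) : Set ℕ :=
  {m | ∃ f : Fin i → ℕ, (∀ k, IsSmooth N (f k)) ∧ ∑ k, f k = m}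

/-- `SdN d N` = `S_{d,N} = ⋃_{i=1}^d Σ_{i,N}`. -/
def SdN (d N : ℕ) : Set ℕ := ⋃ i ∈ Finset.Icc 1 d, SigmaSet i N

lemma isSmooth_iff {N m : ℕ} : IsSmooth N m ↔ m ∈ (N + 1).smoothNumbers := by
  rw [Nat.mem_smoothNumbers']
  constructor
  · rintro ⟨h0, h⟩ p hp hd
    exact Nat.lt_succ_of_le (h p hp hd)
  · intro h
    refine ⟨?_, fun p hp hd => Nat.lt_succ_iff.mp (h p hp hd)⟩
    rcases Nat.eq_zero_or_pos m with rfl | hm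
    · obtain ⟨p, hpN, hp⟩ := Nat.exists_infinite_primes (N + 1)
      exact absurd (h p hp (dvd_zero p)) (by omega)
    · exact hm

lemma summable_smooth_rpow (M : ℕ) {r : ℝ} (hr : r < 0) :
    Summable (fun m : M.smoothNumbers ↦ (m : ℝ) ^ r) := by
  let f : ℕ →* ℝ :=
  { toFun := fun n : ℕ ↦ (n : ℝ) ^ r
    map_one' := by simp
    map_mul' := fun a b => by
      push_cast
      exact Real.mul_rpow (Nat.cast_nonneg a) (Nat.cast_nonneg b) }
  have key := EulerProduct.summable_and_hasSum_smoothNumbers_prod_primesBelow_geometric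
    (F := ℝ) (f := f) (fun {p} hp => ?_) M
  · exact key.1.of_norm
  · have h1 : (1 : ℝ) < (p : ℝ) := by exact_mod_cast hp.one_lt
    have : f p = (p : ℝ) ^ r := rfl
    rw [this, Real.norm_eq_abs, abs_of_nonneg (Real.rpow_nonneg (Nat.cast_nonneg p) r)]
    exact Real.rpow_lt_one_of_one_lt_of_neg h1 hr

set_option maxHeartbeats 1000000 in
lemma summable_pi_prod {σ : Type*} {g : σ → ℝ} (hg : Summable g) (hg0 : ∀ x, 0 ≤ g x)
    (k : ℕ) : Summable (fun a : Fin k → σ ↦ ∏ j, g (a j)) := by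
  induction k with
  | zero => exact Summable.of_finite
  | succ k ih =>
      have hmul : Summable (fun p : σ × (Fin k → σ) ↦ g p.1 * ∏ j, g (p.2 j)) :=
        Summable.mul_of_nonneg (f := g) (g := fun a : Fin k → σ ↦ ∏ j, g (a j)) hg ih
          (fun x => hg0 x) (fun a => Finset.prod_nonneg fun j _ => hg0 _)
      rw [← Equiv.summable_iff (Fin.consEquiv (fun _ : Fin (k + 1) => σ))]
      refine hmul.congr fun p => ?_
      simp [Fin.prod_univ_succ, Fin.consEquiv]

lemma summable_sigmaSet (i N : ℕ) (hi : 0 < i) :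
    Summable (Set.indicator (SigmaSet i N) (fun n : ℕ ↦ (1 : ℝ) / n)) := by
  rw [← summable_subtype_iff_indicator]
  set r : ℝ := -(1 / i) with hr_def
  have hi' : (0 : ℝ) < i := by exact_mod_cast hi
  have hr : r < 0 := by
    have h01 : (0 : ℝ) < 1 / i := by positivity
    rw [hr_def]; linarith
  have hg : Summable (fun m : (N + 1).smoothNumbers ↦ (m : ℝ) ^ r) :=
    summable_smooth_rpow _ hr
  have hG : Summable (fun a : Fin i → (N + 1).smoothNumbers ↦ ∏ j, ((a j : ℕ) : ℝ) ^ r) :=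
    summable_pi_prod hg (fun x => Real.rpow_nonneg (Nat.cast_nonneg _) _) i
  have sec : ∀ m : SigmaSet i N, ∃ f : Fin i → ℕ, (∀ k, IsSmooth N (f k)) ∧ ∑ k, f k = m :=
    fun m => m.2
  choose f hf hsum using sec
  let s : SigmaSet i N → (Fin i → (N + 1).smoothNumbers) :=
    fun m j => ⟨f m j, isSmooth_iff.mp (hf m j)⟩
  have hs_inj : Function.Injective s := by
    intro m₁ m₂ h
    apply Subtype.ext
    rw [← hsum m₁, ← hsum m₂]
    refine Finset.sum_congr rfl fun j _ => ?_
    have := congrFun h j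
    exact congrArg Subtype.val this
  have hcomp := hG.comp_injective hs_inj
  refine hcomp.of_nonneg_of_le (fun m => div_nonneg zero_le_one (Nat.cast_nonneg _)) (fun m => ?_)
  -- pointwise bound : 1 / m ≤ ∏ j, (f m j : ℝ) ^ r
  have hpos : ∀ j, 0 < f m j := fun j => (hf m j).1
  have hmpos : 0 < (m : ℕ) := by
    rw [← hsum m]
    have : 0 < i := hi
    calc 0 < f m ⟨0, hi⟩ := hpos _
    _ ≤ ∑ k, f m k := Finset.single_le_sum (fun k _ => Nat.zero_le _) (Finset.mem_univ _)
  have hle : ∀ j, f m j ≤ (m : ℕ) := by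
    intro j
    rw [← hsum m]
    exact Finset.single_le_sum (fun k _ => Nat.zero_le _) (Finset.mem_univ _)
  set P : ℝ := ∏ j, ((f m j : ℕ) : ℝ) with hP
  have hP_pos : 0 < P := Finset.prod_pos fun j _ => by exact_mod_cast hpos j
  have hP_le : P ≤ ((m : ℕ) : ℝ) ^ (i : ℕ) := by
    calc P ≤ ∏ _j : Fin i, ((m : ℕ) : ℝ) := by
            refine Finset.prod_le_prod (fun j _ => by positivity) (fun j _ => ?_)
            exact_mod_cast hle j
    _ = ((m : ℕ) : ℝ) ^ (i : ℕ) := by simp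
  have hmR : (0 : ℝ) < ((m : ℕ) : ℝ) := by exact_mod_cast hmpos
  have key : (((m : ℕ) : ℝ) ^ (i : ℕ)) ^ r ≤ P ^ r :=
    Real.rpow_le_rpow_of_nonpos hP_pos hP_le hr.le
  have hleft : (((m : ℕ) : ℝ) ^ (i : ℕ)) ^ r = 1 / ((m : ℕ) : ℝ) := by
    rw [← Real.rpow_natCast ((m : ℕ) : ℝ) i, ← Real.rpow_mul hmR.le]
    have : (i : ℝ) * r = -1 := by
      rw [hr_def]; field_simp
    rw [this, Real.rpow_neg_one, one_div]
  have hright : P ^ r = ∏ j, ((f m j : ℕ) : ℝ) ^ r := by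
    rw [hP, ← Real.finset_prod_rpow _ _ (fun j _ => by positivity) r]
  calc (1 : ℝ) / ((m : ℕ) : ℝ) = (((m : ℕ) : ℝ) ^ (i : ℕ)) ^ r := hleft.symm
  _ ≤ P ^ r := key
  _ = ∏ j, ((f m j : ℕ) : ℝ) ^ r := hright
  _ = ∏ j, (((s m j : ℕ) : ℝ)) ^ r := rfl

lemma summable_SdN (N d : ℕ) :
    Summable (Set.indicator (SdN d N) (fun n : ℕ ↦ (1 : ℝ) / n)) := by
  have hsum : Summable (fun n : ℕ ↦
      ∑ i ∈ Finset.Icc 1 d, Set.indicator (SigmaSet i N) (fun n : ℕ ↦ (1 : ℝ) / n) n) :=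
    summable_sum fun i hi => summable_sigmaSet i N (Finset.mem_Icc.mp hi).1
  refine hsum.of_nonneg_of_le
    (fun n => Set.indicator_nonneg (fun x _ => by positivity) n) (fun n => ?_)
  by_cases hn : n ∈ SdN d N
  · rw [Set.indicator_of_mem hn]
    obtain ⟨i, hi, hmem⟩ : ∃ i ∈ Finset.Icc 1 d, n ∈ SigmaSet i N := by
      simpa [SdN, Set.mem_iUnion] using hn
    calc (1 : ℝ) / n = Set.indicator (SigmaSet i N) (fun n : ℕ ↦ (1 : ℝ) / n) n :=
          (Set.indicator_of_mem hmem (fun n : ℕ ↦ (1 : ℝ) / n)).symm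
    _ ≤ _ := Finset.single_le_sum
          (f := fun j => Set.indicator (SigmaSet j N) (fun n : ℕ ↦ (1 : ℝ) / n) n)
          (fun j _ => Set.indicator_nonneg (fun x _ => by positivity) n) hi
  · rw [Set.indicator_of_notMem hn]
    exact Finset.sum_nonneg fun j _ => Set.indicator_nonneg (fun x _ => by positivity) n

theorem infinite_primes_not_in_SdN (N d : ℕ) (hN : 1 ≤ N) (hd : 1 ≤ d) :
    {p : ℕ | p.Prime ∧ p ∉ SdN d N}.Infinite := by
  by_contra hfin
  rw [Set.not_infinite] at hfin
  apply not_summable_one_div_on_primes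
  have h1 := summable_SdN N d
  have h2 : Summable (Set.indicator {p : ℕ | p.Prime ∧ p ∉ SdN d N}
      (fun n : ℕ ↦ (1 : ℝ) / n)) :=
    summable_of_finite_support ((hfin.subset Set.support_indicator_subset).subset (by exact fun x hx => hx))
  refine (h1.add h2).of_nonneg_of_le
    (fun n => Set.indicator_nonneg (fun x _ => by positivity) n) (fun n => ?_)
  by_cases hp : n.Prime
  · rw [Set.indicator_of_mem (by exact hp : n ∈ {p : ℕ | p.Prime})]
    by_cases hn : n ∈ SdN d N
    · have := Set.indicator_of_mem hn (fun n : ℕ ↦ (1 : ℝ) / n)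
      have h2n : 0 ≤ Set.indicator {p : ℕ | p.Prime ∧ p ∉ SdN d N}
          (fun n : ℕ ↦ (1 : ℝ) / n) n :=
        Set.indicator_nonneg (fun x _ => by positivity) n
      linarith [this, h2n]
    · have hmem : n ∈ {p : ℕ | p.Prime ∧ p ∉ SdN d N} := ⟨hp, hn⟩
      have := Set.indicator_of_mem hmem (fun n : ℕ ↦ (1 : ℝ) / n)
      have h1n : 0 ≤ Set.indicator (SdN d N) (fun n : ℕ ↦ (1 : ℝ) / n) n :=
        Set.indicator_nonneg (fun x _ => by positivity) n
      linarith [this, h1n]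
  · rw [Set.indicator_of_notMem (by exact hp : n ∉ {p : ℕ | p.Prime})]
    have h1n : 0 ≤ Set.indicator (SdN d N) (fun n : ℕ ↦ (1 : ℝ) / n) n :=
      Set.indicator_nonneg (fun x _ => by positivity) n
    have h2n : 0 ≤ Set.indicator {p : ℕ | p.Prime ∧ p ∉ SdN d N}
        (fun n : ℕ ↦ (1 : ℝ) / n) n :=
      Set.indicator_nonneg (fun x _ => by positivity) n
    linarith [h1n, h2n]
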